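/- Fix an integer M ≥ 1 and a non-integer real r with 0 < r < M, and let R : (0,∞) → (0,∞) satisfy lim_{SNR→∞} R(SNR)/log₂(SNR) = r. Then the expected number of H-ARQ rounds converges to the ceiling of r: lim_{SNR→∞} E[X(R(SNR), SNR)] = ⌈r⌉; consequently, the long-term average rate R(SNR)/E[X(R(SNR), SNR)] has pre-log r/⌈r⌉, which is strictly smaller than 1. -/

import Mathlib

open MeasureTheory ProbabilityTheory Real Filter Topology

/-- Number of IR H-ARQ rounds: `X(R, SNR) = min(M, min{m ≥ 1 : Σ_{i=1}^m log₂(1+SNR·Hᵢ) > R})`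
(realized as the infimum of `{M} ∪ {m ≥ 1 : accumulated mutual information exceeds R}`). -/
noncomputable def numRounds {Ω : Type*} (H : ℕ → Ω → ℝ) (M : ℕ) (snr R : ℝ) (ω : Ω) : ℕ :=
  sInf ({M} ∪ {m | 1 ≤ m ∧ R < ∑ i ∈ Finset.range m, Real.logb 2 (1 + snr * H i ω)})

section Aux

variable {Ω : Type*} [MeasurableSpace Ω]

lemma numRounds_le (H : ℕ → Ω → ℝ) (M : ℕ) (snr R : ℝ) (ω : Ω) :
    numRounds H M snr R ω ≤ M :=
  Nat.sInf_le (Or.inl rfl)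

lemma measurable_partialSum (H : ℕ → Ω → ℝ) (hmeas : ∀ i, Measurable (H i)) (snr : ℝ) (m : ℕ) :
    Measurable (fun ω => ∑ i ∈ Finset.range m, Real.logb 2 (1 + snr * H i ω)) := by
  apply Finset.measurable_sum
  intro i _
  have h1 : Measurable fun ω => 1 + snr * H i ω :=
    measurable_const.add (measurable_const.mul (hmeas i))
  have : (fun ω => Real.logb 2 (1 + snr * H i ω)) =
      fun ω => Real.log (1 + snr * H i ω) / Real.log 2 := by
    funext ω; rfl
  rw [this]
  exact (Real.measurable_log.comp h1).div_const _

lemma numRounds_eq_iff (H : ℕ → Ω → ℝ) (M : ℕ) (snr R : ℝ) (ω : Ω) (n : ℕ) :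
    numRounds H M snr R ω = n ↔
      (n ∈ ({M} ∪ {m | 1 ≤ m ∧ R < ∑ i ∈ Finset.range m, Real.logb 2 (1 + snr * H i ω)} : Set ℕ)
        ∧ ∀ m < n,
          m ∉ ({M} ∪ {m | 1 ≤ m ∧ R < ∑ i ∈ Finset.range m,
            Real.logb 2 (1 + snr * H i ω)} : Set ℕ)) := by
  unfold numRounds
  set A : Set ℕ :=
    {M} ∪ {m | 1 ≤ m ∧ R < ∑ i ∈ Finset.range m, Real.logb 2 (1 + snr * H i ω)} with hA
  have hne : A.Nonempty := ⟨M, Or.inl rfl⟩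
  constructor
  · rintro rfl
    exact ⟨Nat.sInf_mem hne, fun m hm => Nat.notMem_of_lt_sInf hm⟩
  · rintro ⟨hn, hlt⟩
    have h1 : sInf A ≤ n := Nat.sInf_le hn
    have h2 : ¬ sInf A < n := fun h => hlt _ h (Nat.sInf_mem hne)
    omega

lemma measurable_numRounds (H : ℕ → Ω → ℝ) (hmeas : ∀ i, Measurable (H i)) (M : ℕ)
    (snr R : ℝ) : Measurable (fun ω => numRounds H M snr R ω) := by
  apply measurable_to_countable'
  intro n
  have hmem : ∀ m : ℕ, MeasurableSet {ω : Ω |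
      m ∈ ({M} ∪ {m | 1 ≤ m ∧ R < ∑ i ∈ Finset.range m,
        Real.logb 2 (1 + snr * H i ω)} : Set ℕ)} := by
    intro m
    have : {ω : Ω | m ∈ ({M} ∪ {m | 1 ≤ m ∧ R < ∑ i ∈ Finset.range m,
        Real.logb 2 (1 + snr * H i ω)} : Set ℕ)} =
        {ω : Ω | m = M} ∪ ({ω : Ω | 1 ≤ m} ∩
          {ω : Ω | R < ∑ i ∈ Finset.range m, Real.logb 2 (1 + snr * H i ω)}) := by
      ext ω; simp [Set.mem_union, Set.mem_setOf_eq, Set.mem_inter_iff]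
    rw [this]
    refine (MeasurableSet.const _).union ((MeasurableSet.const _).inter ?_)
    exact measurableSet_lt measurable_const (measurable_partialSum H hmeas snr m)
  have : (fun ω => numRounds H M snr R ω) ⁻¹' {n} =
      {ω : Ω | n ∈ ({M} ∪ {m | 1 ≤ m ∧ R < ∑ i ∈ Finset.range m,
          Real.logb 2 (1 + snr * H i ω)} : Set ℕ)} ∩
        ⋂ (m : ℕ) (_ : m < n), {ω : Ω |
          m ∈ ({M} ∪ {m | 1 ≤ m ∧ R < ∑ i ∈ Finset.range m,
            Real.logb 2 (1 + snr * H i ω)} : Set ℕ)}ᶜ := by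
    ext ω
    simp only [Set.mem_preimage, Set.mem_singleton_iff, numRounds_eq_iff, Set.mem_inter_iff,
      Set.mem_iInter, Set.mem_compl_iff]
    tauto
  rw [this]
  exact (hmem n).inter (MeasurableSet.iInter fun m =>
    MeasurableSet.iInter fun _ => (hmem m).compl)

/-- `log₂(1+snr·h)/log₂ snr → 1` for fixed `h > 0`. -/
lemma tendsto_logb_ratio {h : ℝ} (hh : 0 < h) :
    Tendsto (fun snr : ℝ => Real.logb 2 (1 + snr * h) / Real.logb 2 snr) atTop (𝓝 1) := by
  have key : ∀ᶠ snr : ℝ in atTop,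
      Real.logb 2 (1 + snr * h) / Real.logb 2 snr
        = 1 + Real.log (1 / snr + h) / Real.log snr := by
    filter_upwards [eventually_gt_atTop (1 : ℝ)] with s hs
    have hs0 : 0 < s := lt_trans one_pos hs
    have hls : 0 < Real.log s := Real.log_pos hs
    have hpos : 0 < 1 + s * h := by positivity
    have hfrac : (1 + s * h) / s = 1 / s + h := by field_simp
    have hlog : Real.log (1 + s * h) = Real.log s + Real.log (1 / s + h) := by
      rw [← hfrac, Real.log_div (ne_of_gt hpos) (ne_of_gt hs0)]
      ring
    have hl2 : Real.log 2 ≠ 0 := ne_of_gt (Real.log_pos one_lt_two)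
    rw [Real.logb, Real.logb, hlog]
    field_simp
  rw [tendsto_congr' key]
  have h0 : Tendsto (fun s : ℝ => 1 / s + h) atTop (𝓝 h) := by
    have := (tendsto_inv_atTop_zero (𝕜 := ℝ)).add (tendsto_const_nhds (x := h))
    simpa [one_div] using this
  have h1 : Tendsto (fun s : ℝ => Real.log (1 / s + h)) atTop (𝓝 (Real.log h)) :=
    ((Real.continuousAt_log (ne_of_gt hh)).tendsto.comp h0)
  have h2 : Tendsto (fun s : ℝ => Real.log (1 / s + h) / Real.log s) atTop (𝓝 0) :=
    h1.div_atTop Real.tendsto_log_atTop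
  have := tendsto_const_nhds (x := (1:ℝ)) (f := atTop (α := ℝ)) |>.add h2
  simpa using this

end Aux

/-- if the initial rate has non-integer pre-log `r` with `0 < r < M`, then
`E[X(R(SNR), SNR)] → ⌈r⌉` as `SNR → ∞`; consequently the long-term average rate
`R(SNR)/E[X(R(SNR), SNR)]` has pre-log `r/⌈r⌉ < 1`. -/
theorem expected_rounds_tendsto_ceil_of_noninteger_prelog
    {Ω : Type*} [MeasurableSpace Ω] (μ : Measure Ω) [IsProbabilityMeasure μ]
    (H : ℕ → Ω → ℝ) (hmeas : ∀ i, Measurable (H i))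
    (hindep : iIndepFun H μ)
    (hdist : ∀ i, Measure.map (H i) μ = expMeasure 1)
    (M : ℕ) (hM : 1 ≤ M) (r : ℝ) (hr : 0 < r) (hrM : r < (M : ℝ))
    (hnonint : ∀ n : ℤ, r ≠ (n : ℝ))
    (R : ℝ → ℝ) (hRpos : ∀ snr > (0:ℝ), 0 < R snr)
    (hprelog : Tendsto (fun snr => R snr / Real.logb 2 snr) atTop (𝓝 r)) :
    Tendsto
      (fun snr : ℝ => ∫ ω, (numRounds H M snr (R snr) ω : ℝ) ∂μ)
      atTop (𝓝 ((⌈r⌉ : ℝ))) ∧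
    Tendsto
      (fun snr : ℝ =>
        (R snr / ∫ ω, (numRounds H M snr (R snr) ω : ℝ) ∂μ) / Real.logb 2 snr)
      atTop (𝓝 (r / (⌈r⌉ : ℝ))) ∧
    r / (⌈r⌉ : ℝ) < 1 := by
  classical
  set k : ℕ := (⌈r⌉).toNat with hk
  have hceil_pos : 0 < ⌈r⌉ := Int.ceil_pos.mpr hr
  have hkceil : (k : ℝ) = ((⌈r⌉ : ℤ) : ℝ) := by
    rw [hk]
    exact_mod_cast Int.toNat_of_nonneg hceil_pos.le
  have hrk : r < (k : ℝ) := by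
    rw [hkceil]
    exact lt_of_le_of_ne (Int.le_ceil r) (hnonint ⌈r⌉)
  have hk1r : (k : ℝ) - 1 < r := by
    rw [hkceil]
    have := Int.ceil_lt_add_one r
    push_cast at this ⊢
    linarith
  have hk1 : 1 ≤ k := by
    rw [hk]
    omega
  have hkM : k ≤ M := by
    have h1 : ⌈r⌉ ≤ (M : ℤ) := Int.ceil_le.mpr (by exact_mod_cast hrM.le)
    omega
  -- a.e. positivity of the fading coefficients
  have hpos : ∀ᵐ ω ∂μ, ∀ i, 0 < H i ω := by
    rw [ae_all_iff]
    intro i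
    have hnull : μ {ω | H i ω ≤ 0} = 0 := by
      have hset : {ω | H i ω ≤ 0} = H i ⁻¹' Set.Iic 0 := rfl
      rw [hset, ← Measure.map_apply (hmeas i) measurableSet_Iic, hdist i]
      rw [expMeasure, gammaMeasure, withDensity_apply _ measurableSet_Iic]
      rw [lintegral_Iic_eq_lintegral_Iio_add_Icc _ le_rfl,
        ProbabilityTheory.lintegral_gammaPDF_of_nonpos le_rfl, zero_add]
      have hIcc : (volume (Set.Icc (0:ℝ) 0)) = 0 := by simp
      rw [setLIntegral_measure_zero _ _ hIcc]
    rw [Filter.eventually_iff, mem_ae_iff]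
    have hc : {x | 0 < H i x}ᶜ = {ω | H i ω ≤ 0} := by ext ω; simp [not_lt]
    rw [hc]
    exact hnull
  -- pointwise convergence of the number of rounds
  have hptwise : ∀ ω, (∀ i, 0 < H i ω) →
      Tendsto (fun snr => (numRounds H M snr (R snr) ω : ℝ)) atTop (𝓝 ((⌈r⌉ : ℤ) : ℝ)) := by
    intro ω hω
    have hsum : ∀ m : ℕ, Tendsto (fun snr => (∑ i ∈ Finset.range m,
        Real.logb 2 (1 + snr * H i ω)) / Real.logb 2 snr) atTop (𝓝 m) := by
      intro m
      have h1 : Tendsto (fun snr => ∑ i ∈ Finset.range m,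
          Real.logb 2 (1 + snr * H i ω) / Real.logb 2 snr) atTop
          (𝓝 (∑ _i ∈ Finset.range m, (1:ℝ))) :=
        tendsto_finset_sum _ (fun i _ => tendsto_logb_ratio (hω i))
      simpa [Finset.sum_div] using h1
    have hEk : ∀ᶠ snr in atTop,
        R snr < ∑ i ∈ Finset.range k, Real.logb 2 (1 + snr * H i ω) := by
      have hlt := hprelog.eventually_lt (hsum k) hrk
      filter_upwards [hlt, eventually_gt_atTop (1:ℝ)] with s h1 h2
      have hL : 0 < Real.logb 2 s := Real.logb_pos one_lt_two h2
      exact (div_lt_div_iff_of_pos_right hL).mp h1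
    have hEm : ∀ᶠ snr in atTop, ∀ m ∈ Set.Iio k,
        (∑ i ∈ Finset.range m, Real.logb 2 (1 + snr * H i ω)) < R snr := by
      rw [eventually_all_finite (Set.finite_Iio k)]
      intro m hm
      have hmr : (m : ℝ) < r := by
        have hmk : m + 1 ≤ k := hm
        have h2 : ((m : ℝ) + 1) ≤ (k : ℝ) := by exact_mod_cast hmk
        linarith
      have hlt := (hsum m).eventually_lt hprelog hmr
      filter_upwards [hlt, eventually_gt_atTop (1:ℝ)] with s h1 h2
      have hL : 0 < Real.logb 2 s := Real.logb_pos one_lt_two h2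
      exact (div_lt_div_iff_of_pos_right hL).mp h1
    have heq : ∀ᶠ snr in atTop, numRounds H M snr (R snr) ω = k := by
      filter_upwards [hEk, hEm] with s h1 h2
      refine le_antisymm (Nat.sInf_le (Or.inr ⟨hk1, h1⟩)) ?_
      refine le_csInf ⟨M, Or.inl rfl⟩ ?_
      rintro m (rfl | ⟨hm1, hmlt⟩)
      · exact hkM
      · by_contra hcon
        push_neg at hcon
        exact absurd hmlt (not_lt.mpr (h2 m hcon).le)
    refine Tendsto.congr' ?_ tendsto_const_nhds
    filter_upwards [heq] with s hs
    rw [hs, hkceil]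
  -- dominated convergence
  have hint : Tendsto
      (fun snr : ℝ => ∫ ω, (numRounds H M snr (R snr) ω : ℝ) ∂μ)
      atTop (𝓝 (∫ _ω, ((⌈r⌉ : ℤ) : ℝ) ∂μ)) := by
    refine tendsto_integral_filter_of_dominated_convergence (fun _ => (M : ℝ))
      (Eventually.of_forall fun snr => ?_) (Eventually.of_forall fun snr => ?_)
      (integrable_const _) ?_
    · exact (measurable_from_top.comp
        (measurable_numRounds H hmeas M snr (R snr))).aestronglyMeasurable
    · refine Eventually.of_forall fun ω => ?_
      simpa [Real.norm_natCast] using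
        (Nat.cast_le (α := ℝ)).mpr (numRounds_le H M snr (R snr) ω)
    · filter_upwards [hpos] with ω hω using hptwise ω hω
  have hconst : (∫ _ω, ((⌈r⌉ : ℤ) : ℝ) ∂μ) = ((⌈r⌉ : ℤ) : ℝ) := by
    simp
  rw [hconst] at hint
  have hceilR : (0:ℝ) < ((⌈r⌉ : ℤ) : ℝ) := by exact_mod_cast hceil_pos
  have hrlt : r < ((⌈r⌉ : ℤ) : ℝ) := by rw [← hkceil]; exact hrk
  refine ⟨hint, ?_, (div_lt_one hceilR).mpr hrlt⟩
  have h2 : Tendsto (fun snr : ℝ =>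
      (R snr / Real.logb 2 snr) / ∫ ω, (numRounds H M snr (R snr) ω : ℝ) ∂μ)
      atTop (𝓝 (r / ((⌈r⌉ : ℤ) : ℝ))) :=
    hprelog.div hint (ne_of_gt hceilR)
  refine h2.congr fun s => ?_
  rw [div_right_comm]
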